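/- Let f : R^N → R be partially separable of degree ω (i.e., f = Σ_{J∈𝒥} f_J with each convex differentiable f_J depending on blocks in J only, and |J| ≤ ω for all J ∈ 𝒥), satisfying the block Lipschitz condition with constants L_i. Then ∇f is globally Lipschitz with constant ω with respect to the norm ‖·‖_L: f(x+h) ≤ f(x) + ⟨∇f(x), h⟩ + (ω/2)‖h‖_L² for all x, h. -/

import Mathlib

open Finset
open scoped Classical

/-- **Global Lipschitz continuity of `∇f` for partially separable `f`.** Let
`f = ∑_{J ∈ 𝒥} f_J` be partially separable of degree `ω` (each `f_J` convex,
differentiable, depending only on blocks in `J`, with `|J| ≤ ω`), satisfying the block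
Lipschitz condition with constants `Lᵢ`. Then for all `x, h`:
`f(x+h) ≤ f(x) + ⟨∇f(x), h⟩ + (ω/2)‖h‖_L²`. -/
theorem global_lipschitz_partially_separable
    (n : ℕ) (E : Fin n → Type*) [∀ i, NormedAddCommGroup (E i)]
    [∀ i, NormedSpace ℝ (E i)]
    (L : Fin n → ℝ) (hL : ∀ i, 0 < L i)
    (ι : Type*) [Fintype ι] (J : ι → Finset (Fin n)) (ω : ℕ)
    (hω : ∀ a, (J a).card ≤ ω)
    (fJ : ι → (∀ i, E i) → ℝ)
    (hconv : ∀ a, ConvexOn ℝ Set.univ (fJ a))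
    (hdiff : ∀ a, Differentiable ℝ (fJ a))
    (hdep : ∀ a, ∀ x y : ∀ i, E i, (∀ i ∈ J a, x i = y i) → fJ a x = fJ a y)
    (f : (∀ i, E i) → ℝ) (hf : f = fun x => ∑ a, fJ a x)
    (hlip : ∀ (x : ∀ i, E i) (i : Fin n) (t : E i),
      f (x + Pi.single i t)
        ≤ f x + fderiv ℝ f x (Pi.single i t) + L i / 2 * ‖t‖ ^ 2)
    (x h : ∀ i, E i) :
    f (x + h) ≤ f x + fderiv ℝ f x h + (ω : ℝ) / 2 * ∑ i, L i * ‖h i‖ ^ 2 := by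
  have hfy : ∀ y, f y = ∑ a, fJ a y := fun y => by rw [hf]
  rcases Nat.eq_zero_or_pos ω with hω0 | hω1
  · -- degenerate case: all J a empty, f constant
    subst hω0
    have hJ : ∀ a, J a = ∅ := fun a => Finset.card_eq_zero.mp (Nat.le_zero.mp (hω a))
    have hconst : ∀ (y : ∀ i, E i), f y = f x := by
      intro y
      rw [hfy, hfy]
      exact Finset.sum_congr rfl fun a _ => hdep a y x (by simp [hJ a])
    have hfc : f = fun _ => f x := funext hconst
    rw [hconst (x + h), hfc, fderiv_fun_const]
    simp
  · set W : ℝ := (ω : ℝ) with hWdef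
    have hWpos : (0:ℝ) < W := by rw [hWdef]; exact_mod_cast hω1
    have hWne : W ≠ 0 := hWpos.ne'
    set g : ι → Fin n → ℝ := fun a i => fJ a (x + Pi.single i (W • h i)) with hg
    have hout : ∀ a i, i ∉ J a → g a i = fJ a x := by
      intro a i hi
      apply hdep
      intro j hj
      have hji : j ≠ i := fun e => hi (e ▸ hj)
      simp [Pi.single_eq_of_ne hji]
    have key : ∀ a, fJ a (x + h) ≤ fJ a x + (1/W) * ∑ i, (g a i - fJ a x) := by
      intro a
      set c : ℝ := ((J a).card : ℝ) with hc
      have hcW : c ≤ W := by rw [hc, hWdef]; exact_mod_cast hω a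
      have hc0 : (0:ℝ) ≤ c := Nat.cast_nonneg _
      set w : Option (Fin n) → ℝ :=
        fun o => o.elim ((W - c)/W) (fun i => if i ∈ J a then 1/W else 0) with hw
      set p : Option (Fin n) → (∀ i, E i) :=
        fun o => o.elim x (fun i => x + Pi.single i (W • h i)) with hp
      have hw0 : ∀ o ∈ (Finset.univ : Finset (Option (Fin n))), 0 ≤ w o := by
        rintro (_ | i) _
        · exact div_nonneg (by linarith) hWpos.le
        · dsimp [w]
          split
          · positivity
          · exact le_refl 0
      have hwsum : ∑ o, w o = 1 := by
        rw [Fintype.sum_option]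
        simp only [w, Option.elim]
        rw [Finset.sum_ite_mem, Finset.univ_inter, Finset.sum_const, nsmul_eq_mul]
        rw [← hc]
        field_simp
        ring
      have hsum : ∑ o : Option (Fin n), w o • p o = x + ∑ i ∈ J a, Pi.single i (h i) := by
        rw [Fintype.sum_option]
        simp only [w, p, Option.elim, ite_smul, zero_smul]
        rw [Finset.sum_ite_mem, Finset.univ_inter]
        have hterm : ∀ i ∈ J a,
            (1/W) • (x + Pi.single i (W • h i)) = (1/W) • x + Pi.single i (h i) := by
          intro i _
          rw [smul_add, ← Pi.single_smul, smul_smul, one_div, inv_mul_cancel₀ hWne, one_smul]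
        rw [Finset.sum_congr rfl hterm, Finset.sum_add_distrib, Finset.sum_const]
        rw [← Nat.cast_smul_eq_nsmul ℝ, smul_smul, ← add_assoc, ← add_smul, ← hc]
        have hco : (W - c)/W + c * (1/W) = 1 := by field_simp; ring
        rw [hco, one_smul]
      have hval : fJ a (x + ∑ i ∈ J a, Pi.single i (h i)) = fJ a (x + h) := by
        apply hdep
        intro j hj
        have : (∑ i ∈ J a, Pi.single i (h i)) j = h j := by
          rw [Finset.sum_apply]
          rw [Finset.sum_eq_single_of_mem j hj
            (fun i _ hij => Pi.single_eq_of_ne (Ne.symm hij) _)]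
          exact Pi.single_eq_same j (h j)
        simp [this]
      have jensen := (hconv a).map_sum_le hw0 hwsum (fun o _ => Set.mem_univ (p o))
      rw [hsum, hval] at jensen
      have hrhs : ∑ o : Option (Fin n), w o * fJ a (p o)
          = fJ a x + (1/W) * ∑ i, (g a i - fJ a x) := by
        rw [Fintype.sum_option]
        simp only [w, p, Option.elim, ite_mul, zero_mul]
        have hterm : ∀ i : Fin n,
            (if i ∈ J a then (1/W) * fJ a (x + Pi.single i (W • h i)) else 0)
            = (1/W) * (g a i - fJ a x) + (if i ∈ J a then (1/W) * fJ a x else 0) := by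
          intro i
          by_cases hi : i ∈ J a
          · simp only [hi, if_true, hg]; ring
          · simp only [hi, if_false, hout a i hi]; ring
        rw [Finset.sum_congr rfl (fun i _ => hterm i), Finset.sum_add_distrib]
        rw [Finset.sum_ite_mem, Finset.univ_inter, Finset.sum_const, nsmul_eq_mul, ← hc,
          ← Finset.mul_sum]
        field_simp
        ring
      simp only [smul_eq_mul] at jensen
      rw [hrhs] at jensen
      exact jensen
    -- sum over a
    have step1 : f (x + h) ≤ f x + (1/W) * ∑ i, (f (x + Pi.single i (W • h i)) - f x) := by
      rw [hfy (x + h), hfy x]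
      calc ∑ a, fJ a (x + h)
          ≤ ∑ a, (fJ a x + (1/W) * ∑ i, (g a i - fJ a x)) :=
            Finset.sum_le_sum (fun a _ => key a)
        _ = ∑ a, fJ a x + (1/W) * ∑ i, (f (x + Pi.single i (W • h i)) - ∑ a, fJ a x) := by
            rw [Finset.sum_add_distrib, ← Finset.mul_sum, Finset.sum_comm]
            refine congrArg _ (congrArg _ (Finset.sum_congr rfl fun i _ => ?_))
            rw [Finset.sum_sub_distrib, hfy (x + Pi.single i (W • h i))]
    have hsingle : ∑ i, Pi.single i (W • h i) = W • h := by
      have h0 := Finset.univ_sum_single (W • h)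
      simpa using h0
    have sumlip : ∑ i, (f (x + Pi.single i (W • h i)) - f x)
        ≤ W * fderiv ℝ f x h + W^2/2 * ∑ i, L i * ‖h i‖^2 := by
      have hb : ∀ i, f (x + Pi.single i (W • h i)) - f x
          ≤ fderiv ℝ f x (Pi.single i (W • h i)) + W^2/2 * (L i * ‖h i‖^2) := by
        intro i
        have h1 := hlip x i (W • h i)
        have hn : ‖W • h i‖^2 = W^2 * ‖h i‖^2 := by
          rw [norm_smul, Real.norm_eq_abs, abs_of_pos hWpos, mul_pow]
        rw [hn] at h1
        nlinarith [h1]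
      calc ∑ i, (f (x + Pi.single i (W • h i)) - f x)
          ≤ ∑ i, (fderiv ℝ f x (Pi.single i (W • h i)) + W^2/2 * (L i * ‖h i‖^2)) :=
            Finset.sum_le_sum fun i _ => hb i
        _ = W * fderiv ℝ f x h + W^2/2 * ∑ i, L i * ‖h i‖^2 := by
            rw [Finset.sum_add_distrib, ← Finset.mul_sum, ← map_sum, hsingle, map_smul]
            simp [smul_eq_mul]
    have h2 : (1/W) * ∑ i, (f (x + Pi.single i (W • h i)) - f x)
        ≤ fderiv ℝ f x h + W/2 * ∑ i, L i * ‖h i‖^2 := by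
      have h3 := mul_le_mul_of_nonneg_left sumlip (by positivity : (0:ℝ) ≤ 1/W)
      have h4 : (1/W) * (W * fderiv ℝ f x h + W^2/2 * ∑ i, L i * ‖h i‖^2)
          = fderiv ℝ f x h + W/2 * ∑ i, L i * ‖h i‖^2 := by
        field_simp
      linarith [h3, h4.le, h4.ge]
    linarith [step1, h2]
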